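/- arXiv:2309.08084 — 3 statements merged into one kernel-verified Lean document; each statement's English description precedes it below -/
import Mathlib

section
/- Let V be a lextensive category (extensive with finite limits) admitting all set-indexed copowers of the terminal object, and write X · 1 for the copower of the terminal object 1 by a set X. Then the copower functor Set → V, X ↦ X · 1, preserves pullbacks. -/
open CategoryTheory CategoryTheory.Limits

universe v u

variable (V : Type u) [Category.{v} V]

/-- The copower functor `Set → V`, `X ↦ X · 1`, sending a set to the `X`-indexed copower of
the terminal object. -/
noncomputable def copowerFunctor [HasTerminal V] [HasCoproducts.{v} V] : Type v ⥤ V where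
  obj X := ∐ fun (_ : X) => (⊤_ V)
  map {X Y} f := Sigma.desc fun x => Sigma.ι (fun (_ : Y) => (⊤_ V)) (f x)
  map_id X := by
    ext x
    simp
  map_comp {X Y Z} f g := by
    ext x
    simp

section Aux

variable [HasTerminal V] [HasCoproducts.{v} V]

@[simp]
lemma ι_copowerFunctor_map {A B : Type v} (u : A ⟶ B) (a : A) :
    Sigma.ι (fun _ : A => (⊤_ V)) a ≫ (copowerFunctor V).map u
      = Sigma.ι (fun _ : B => (⊤_ V)) (u a) := by
  simp [copowerFunctor]

/-- The cofan expressing `A·1` as the coproduct over `b : B` of the copowers of the fibers. -/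
noncomputable def fiberCofan {A B : Type v} (u : A → B) :
    Cofan (fun b : B => (copowerFunctor V).obj {a : A // u a = b}) :=
  Cofan.mk ((copowerFunctor V).obj A)
    (fun b => (copowerFunctor V).map (↾(Subtype.val : {a : A // u a = b} → A)))

noncomputable def isColimitFiberCofan {A B : Type v} (u : A → B) :
    IsColimit (fiberCofan V u) :=
  mkCofanColimit _
    (fun t => Sigma.desc fun a =>
      Sigma.ι (fun _ : {a' : A // u a' = u a} => (⊤_ V)) ⟨a, rfl⟩ ≫ t.inj (u a))
    (fun t b => by
      refine Sigma.hom_ext (f := fun _ : {a' : A // u a' = b} => (⊤_ V)) _ _ fun a' => ?_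
      obtain ⟨a, rfl⟩ := a'
      simp [fiberCofan, copowerFunctor])
    (fun t m hm => by
      refine Sigma.hom_ext (f := fun _ : A => (⊤_ V)) _ _ fun a => ?_
      have h : Sigma.ι (fun _ : A => (⊤_ V)) a
          = Sigma.ι (fun _ : {a' : A // u a' = u a} => (⊤_ V)) ⟨a, rfl⟩
            ≫ (fiberCofan V u).inj (u a) := by
        simp [fiberCofan]
      rw [h]; erw [Category.assoc, hm (u a)]
      simp [fiberCofan, copowerFunctor])


/-- In presence of the van Kampen property, each fiber square is a pullback. -/
lemma fiber_isPullback
    (hVK : ∀ {ι : Type v} (F : Discrete ι ⥤ V) (c : Cocone F),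
      IsColimit c → IsVanKampenColimit c)
    {A B : Type v} (u : A → B) (b : B) :
    IsPullback ((copowerFunctor V).map (↾(Subtype.val : {a : A // u a = b} → A)))
      (terminal.from _) ((copowerFunctor V).map (↾u))
      (Sigma.ι (fun _ : B => (⊤_ V)) b) := by
  have H := hVK (Discrete.functor fun _ : B => (⊤_ V)) (colimit.cocone _)
    (colimit.isColimit _)
  have comm : (Discrete.natTrans (fun b => terminal.from _) :
        Discrete.functor (fun b : B => (copowerFunctor V).obj {a : A // u a = b}) ⟶
          Discrete.functor fun _ : B => (⊤_ V)) ≫ (colimit.cocone _).ι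
      = (fiberCofan V u).ι ≫
          (Functor.const _).map ((copowerFunctor V).map (↾u)) := by
    ext ⟨b⟩
    refine Sigma.hom_ext (f := fun _ : {a : A // u a = b} => (⊤_ V)) _ _ fun a' => ?_
    obtain ⟨a, rfl⟩ := a'
    have h1 : terminal.from (⊤_ V) = 𝟙 _ := terminal.hom_ext _ _
    simp [fiberCofan, copowerFunctor]
    rw [h1, Category.id_comp]
  have := (H (fiberCofan V u) _ _ comm
    (NatTrans.equifibered_of_discrete _)).mp ⟨isColimitFiberCofan V u⟩ ⟨b⟩
  simp [fiberCofan] at this; exact this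


lemma isPullback_isoComp {P Q X Y Z : V} (φ : Q ⟶ P) [IsIso φ]
    {a : P ⟶ X} {b : P ⟶ Y} {f : X ⟶ Z} {g : Y ⟶ Z}
    (h : IsPullback a b f g) : IsPullback (φ ≫ a) (φ ≫ b) f g := by
  have s : IsPullback φ (φ ≫ b) b (𝟙 Y) :=
    IsPullback.of_horiz_isIso ⟨by simp⟩
  simpa using s.paste_horiz h

end Aux

section Prod

variable [HasFiniteLimits V] [HasCoproducts.{v} V]

lemma prod_isPullback
    (hVK : ∀ {ι : Type v} (F : Discrete ι ⥤ V) (c : Cocone F),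
      IsColimit c → IsVanKampenColimit c)
    (A B : Type v) :
    IsPullback ((copowerFunctor V).map (↾(Prod.fst : A × B → A)))
      ((copowerFunctor V).map (↾(Prod.snd : A × B → B)))
      (terminal.from _) (terminal.from _) := by
  classical
  -- the candidate coproduct injections into the product
  let inj : ∀ _ : A, (copowerFunctor V).obj B ⟶ (copowerFunctor V).obj A ⨯ (copowerFunctor V).obj B := fun a =>
    prod.lift (X := (copowerFunctor V).obj A) (terminal.from _ ≫ Sigma.ι (fun _ : A => (⊤_ V)) a) (𝟙 _)
  -- each injection square is a pullback
  have sq : ∀ a : A, IsPullback (inj a) (terminal.from _) prod.fst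
      (Sigma.ι (fun _ : A => (⊤_ V)) a) := by
    intro a
    refine IsPullback.of_isLimit' ⟨by exact prod.lift_fst _ _⟩ ?_
    refine PullbackCone.IsLimit.mk _ (fun s => s.fst ≫ prod.snd) ?_ ?_ ?_
    · intro s
      refine prod.hom_ext ?_ ?_
      · simp only [inj, Category.assoc, prod.lift_fst]
        rw [s.condition]
        have h2 : ((s.fst ≫ prod.snd) ≫ terminal.from ((copowerFunctor V).obj B) : s.pt ⟶ ⊤_ V) = s.snd :=
          terminal.hom_ext _ _
        erw [reassoc_of% h2]
      · simp only [inj, Category.assoc]; erw [prod.lift_snd, Category.comp_id]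
    · intro s
      exact terminal.hom_ext _ _
    · intro s m hm₁ _
      have : m ≫ inj a ≫ prod.snd = s.fst ≫ prod.snd := by
        rw [← Category.assoc, hm₁]
      simp only [inj] at this; erw [prod.lift_snd, Category.comp_id] at this; exact this
  -- the product is the coproduct of the `inj`s, by universality
  have hc2 : IsColimit (Cofan.mk ((copowerFunctor V).obj A ⨯ (copowerFunctor V).obj B) inj) := by
    have H := hVK (Discrete.functor fun _ : A => (⊤_ V)) (colimit.cocone _)
      (colimit.isColimit _)
    refine (H.isUniversal (Cofan.mk ((copowerFunctor V).obj A ⨯ (copowerFunctor V).obj B) inj)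
      (Discrete.natTrans fun _ => terminal.from _) prod.fst ?_
      (NatTrans.equifibered_of_discrete _) ?_).some
    · ext ⟨a⟩
      exact (sq a).w.symm
    · rintro ⟨a⟩
      exact sq a
  -- `(A × B)·1` is also a coproduct of copies of `B·1`
  have hc1 : IsColimit (Cofan.mk ((copowerFunctor V).obj (A × B))
      (fun a : A => (copowerFunctor V).map (↾(fun b : B => (a, b))))) := by
    refine mkCofanColimit _
      (fun t => Sigma.desc fun p : A × B =>
        Sigma.ι (fun _ : B => (⊤_ V)) p.2 ≫ t.inj p.1) ?_ ?_
    · intro t a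
      refine Sigma.hom_ext (f := fun _ : B => (⊤_ V)) _ _ fun b => ?_
      simp [copowerFunctor]
    · intro t m hm
      refine Sigma.hom_ext (f := fun _ : A × B => (⊤_ V)) _ _ fun p => ?_
      have h : Sigma.ι (fun _ : A × B => (⊤_ V)) p
          = Sigma.ι (fun _ : B => (⊤_ V)) p.2
            ≫ (copowerFunctor V).map (↾(fun b : B => (p.1, b))) := by
        simp [copowerFunctor]
      have hm' : ∀ j : A, (copowerFunctor V).map (↾(fun b : B => (j, b))) ≫ m = t.inj j :=
        fun j => hm j
      rw [h]; erw [Category.assoc, hm' p.1]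
      simp [copowerFunctor]
  -- the comparison map is a cocone morphism, hence an iso
  let φ : (copowerFunctor V).obj (A × B) ⟶ (copowerFunctor V).obj A ⨯ (copowerFunctor V).obj B :=
    prod.lift ((copowerFunctor V).map (↾(Prod.fst : A × B → A))) ((copowerFunctor V).map (↾(Prod.snd : A × B → B)))
  have hφ : ∀ a : A, (copowerFunctor V).map (↾(fun b : B => (a, b))) ≫ φ = inj a := by
    intro a
    refine Sigma.hom_ext (f := fun _ : B => (⊤_ V)) _ _ fun b => ?_
    refine prod.hom_ext ?_ ?_
    · have h1 : terminal.from (⊤_ V) = 𝟙 _ := terminal.hom_ext _ _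
      simp only [φ, inj]
      erw [Category.assoc, Category.assoc, Category.assoc, prod.lift_fst, prod.lift_fst]
      have h3 : Sigma.ι (fun _ : B => (⊤_ V)) b ≫ terminal.from _ = 𝟙 _ := terminal.hom_ext _ _
      erw [← Functor.map_comp]; erw [ι_copowerFunctor_map, reassoc_of% h3]
      rfl
    · simp only [φ, inj, Category.assoc]
      erw [Category.assoc, Category.assoc, Category.assoc, prod.lift_snd, prod.lift_snd, Category.comp_id]
      erw [← Functor.map_comp]; erw [ι_copowerFunctor_map]
      rfl
  have hiso : IsIso φ := by
    have e1 : φ = hc1.desc (Cofan.mk ((copowerFunctor V).obj A ⨯ (copowerFunctor V).obj B) inj) :=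
      hc1.uniq (Cofan.mk ((copowerFunctor V).obj A ⨯ (copowerFunctor V).obj B) inj) φ (fun ⟨a⟩ => hφ a)
    have e2 : (hc1.coconePointUniqueUpToIso hc2).hom
        = hc1.desc (Cofan.mk ((copowerFunctor V).obj A ⨯ (copowerFunctor V).obj B) inj) :=
      hc1.uniq _ _ (fun j => IsColimit.comp_coconePointUniqueUpToIso_hom hc1 hc2 j)
    rw [e1, ← e2]
    infer_instance
  -- transfer the pullback property along `φ`
  refine IsPullback.of_isLimit' ⟨terminal.hom_ext _ _⟩ ?_
  refine PullbackCone.IsLimit.mk _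
    (fun s => prod.lift s.fst s.snd ≫ inv φ) ?_ ?_ ?_
  · intro s
    have : inv φ ≫ (copowerFunctor V).map (↾(Prod.fst : A × B → A))
        = prod.fst := by
      rw [IsIso.inv_comp_eq]
      exact (prod.lift_fst _ _).symm
    rw [Category.assoc, this, prod.lift_fst]
  · intro s
    have : inv φ ≫ (copowerFunctor V).map (↾(Prod.snd : A × B → B))
        = prod.snd := by
      rw [IsIso.inv_comp_eq]
      exact (prod.lift_snd _ _).symm
    rw [Category.assoc, this, prod.lift_snd]
  · intro s m hm₁ hm₂
    rw [← Category.comp_id m, ← IsIso.hom_inv_id φ, ← Category.assoc]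
    congr 1
    refine prod.hom_ext ?_ ?_
    · rw [Category.assoc]; erw [prod.lift_fst, prod.lift_fst]; exact hm₁
    · rw [Category.assoc]; erw [prod.lift_snd, prod.lift_snd]; exact hm₂

end Prod

section Main

variable [HasFiniteLimits V] [HasCoproducts.{v} V]

lemma copower_preserves_cospan
    (hVK : ∀ {ι : Type v} (F : Discrete ι ⥤ V) (c : Cocone F),
      IsColimit c → IsVanKampenColimit c)
    {X Y Z : Type v} (f : X ⟶ Z) (g : Y ⟶ Z) :
    PreservesLimit (cospan f g) (copowerFunctor V) := by
  classical
  let P : Type v := {p : X × Y // f p.1 = g p.2}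
  let pr1 : P ⟶ X := ↾fun (p : P) => p.1.1
  let pr2 : P ⟶ Y := ↾fun (p : P) => p.1.2
  have cond : pr1 ≫ f = pr2 ≫ g := by ext p; exact p.2
  have hc : IsLimit (PullbackCone.mk pr1 pr2 cond) := by
    refine PullbackCone.IsLimit.mk _
      (fun s => ↾fun x => (⟨(s.fst x, s.snd x), ConcreteCategory.congr_hom s.condition x⟩ : P)) ?_ ?_ ?_
    · intro s; rfl
    · intro s; rfl
    · intro s m hm₁ hm₂
      refine ConcreteCategory.hom_ext _ _ fun x => ?_
      exact Subtype.ext (Prod.ext (by exact ConcreteCategory.congr_hom hm₁ x) (by exact ConcreteCategory.congr_hom hm₂ x))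
  -- the main pullback square in V
  have hW := IsPullback.of_hasPullback ((copowerFunctor V).map f) ((copowerFunctor V).map g)
  have kcond : (copowerFunctor V).map pr1 ≫ (copowerFunctor V).map f
      = (copowerFunctor V).map pr2 ≫ (copowerFunctor V).map g := by
    rw [← Functor.map_comp, ← Functor.map_comp, cond]
  let k : (copowerFunctor V).obj P ⟶ pullback ((copowerFunctor V).map f) ((copowerFunctor V).map g) :=
    pullback.lift _ _ kcond
  let h : P ⟶ Z := ↾fun (p : P) => f p.1.1
  -- the key squares over each `z : Z`
  have sqz : ∀ z : Z, IsPullback ((fiberCofan V h).inj z ≫ k)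
      (terminal.from ((copowerFunctor V).obj {p : P // h p = z}))
      (pullback.snd _ _ ≫ (copowerFunctor V).map g)
      (Sigma.ι (fun _ : Z => (⊤_ V)) z) := by
    intro z
    have hBX := fiber_isPullback V hVK f z
    have hBY := fiber_isPullback V hVK g z
    have hCz := prod_isPullback V hVK {x : X // f x = z} {y : Y // g y = z}
    let e : ({p : P // h p = z} : Type v) ⟶ ({x : X // f x = z} × {y : Y // g y = z} : Type v) :=
      ↾fun (p : {p : P // h p = z}) => (⟨p.1.1.1, p.2⟩, ⟨p.1.1.2, p.1.2.symm.trans p.2⟩)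
    have : IsIso e :=
      ⟨⟨↾fun (q : {x : X // f x = z} × {y : Y // g y = z}) => (⟨⟨(q.1.1, q.2.1), q.1.2.trans q.2.2.symm⟩, q.1.2⟩ : {p : P // h p = z}), rfl, rfl⟩⟩
    have hP := isPullback_isoComp V ((copowerFunctor V).map e) hCz
    rw [← Functor.map_comp, ← Functor.map_comp] at hP
    have hB2 := hP.paste_horiz hBX
    rw [← Functor.map_comp, ← hBY.w] at hB2
    have hfst : ((fiberCofan V h).inj z ≫ k) ≫ pullback.fst _ _
        = (copowerFunctor V).map
            ((e ≫ (↾(Prod.fst : {x : X // f x = z} × {y : Y // g y = z} → {x : X // f x = z}))) ≫ (↾(Subtype.val : {x : X // f x = z} → X))) := by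
      show ((copowerFunctor V).map _ ≫ k) ≫ _ = _
      rw [Category.assoc]
      show (copowerFunctor V).map _ ≫ pullback.lift _ _ kcond ≫ _ = _
      rw [pullback.lift_fst, ← Functor.map_comp]
      rfl
    have hsnd : ((fiberCofan V h).inj z ≫ k) ≫ pullback.snd _ _
        = (copowerFunctor V).map (e ≫ (↾(Prod.snd : {x : X // f x = z} × {y : Y // g y = z} → {y : Y // g y = z})))
            ≫ (copowerFunctor V).map (↾(Subtype.val : {y : Y // g y = z} → Y)) := by
      show ((copowerFunctor V).map _ ≫ k) ≫ _ = _
      rw [Category.assoc]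
      show (copowerFunctor V).map _ ≫ pullback.lift _ _ kcond ≫ _ = _
      rw [pullback.lift_snd, ← Functor.map_comp, ← Functor.map_comp]
      rfl
    have hB1 : IsPullback ((fiberCofan V h).inj z ≫ k)
        ((copowerFunctor V).map (e ≫ (↾(Prod.snd : {x : X // f x = z} × {y : Y // g y = z} → {y : Y // g y = z}))))
        (pullback.snd _ _)
        ((copowerFunctor V).map (↾(Subtype.val : {y : Y // g y = z} → Y))) := by
      refine IsPullback.of_right ?_ hsnd hW
      rw [hfst]
      exact hB2
    have final := (hB1.flip.paste_horiz hBY.flip).flip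
    have he : (copowerFunctor V).map (e ≫ (↾(Prod.snd : {x : X // f x = z} × {y : Y // g y = z} → {y : Y // g y = z})))
        ≫ terminal.from ((copowerFunctor V).obj {y : Y // g y = z})
        = terminal.from ((copowerFunctor V).obj {p : P // h p = z}) :=
      terminal.hom_ext _ _
    rwa [he] at final
  -- the pullback is the coproduct of the fibers of `h`
  have hc1 := isColimitFiberCofan V h
  have H := hVK (Discrete.functor fun _ : Z => (⊤_ V)) (colimit.cocone _)
    (colimit.isColimit _)
  have comm2 : (Discrete.natTrans (fun z => terminal.from _) :
        (Discrete.functor fun z : Z => (copowerFunctor V).obj {p : P // h p = z}) ⟶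
          Discrete.functor fun _ : Z => (⊤_ V)) ≫ (colimit.cocone _).ι
      = (Cofan.mk (pullback ((copowerFunctor V).map f) ((copowerFunctor V).map g))
          (fun z => (fiberCofan V h).inj z ≫ k)).ι ≫
          (Functor.const _).map (pullback.snd _ _ ≫ (copowerFunctor V).map g) := by
    ext ⟨z⟩
    exact (sqz z).w.symm
  have hc2 : IsColimit (Cofan.mk
      (pullback ((copowerFunctor V).map f) ((copowerFunctor V).map g))
      (fun z => (fiberCofan V h).inj z ≫ k)) :=
    (H.isUniversal _ _ _ comm2 (NatTrans.equifibered_of_discrete _)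
      (fun ⟨z⟩ => sqz z)).some
  have e1 : k = hc1.desc (Cofan.mk _ (fun z => (fiberCofan V h).inj z ≫ k)) :=
    hc1.uniq (Cofan.mk _ (fun z => (fiberCofan V h).inj z ≫ k)) k (fun ⟨z⟩ => rfl)
  have e2 : (hc1.coconePointUniqueUpToIso hc2).hom
      = hc1.desc (Cofan.mk _ (fun z => (fiberCofan V h).inj z ≫ k)) :=
    hc1.uniq _ _ (fun j => IsColimit.comp_coconePointUniqueUpToIso_hom hc1 hc2 j)
  have hk : IsIso k := by
    rw [e1, ← e2]
    exact Iso.isIso_hom _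
  have big : IsPullback ((copowerFunctor V).map pr1) ((copowerFunctor V).map pr2)
      ((copowerFunctor V).map f) ((copowerFunctor V).map g) :=
    IsPullback.of_iso_pullback ⟨kcond⟩ (asIso k)
      (pullback.lift_fst _ _ _) (pullback.lift_snd _ _ _)
  refine preservesLimit_of_preserves_limit_cone hc ?_
  exact (isLimitMapConePullbackConeEquiv (copowerFunctor V) cond).symm big.isLimit

end Main

/-- If `V` is lextensive (finite limits, and set-indexed coproducts which are van Kampen,
i.e. disjoint and universal), then the copower functor `Set → V`, `X ↦ X · 1`,
preserves pullbacks. -/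
theorem copowerFunctor_preservesPullbacks
    [HasFiniteLimits V] [HasCoproducts.{v} V]
    (hVK : ∀ {ι : Type v} (F : Discrete ι ⥤ V) (c : Cocone F),
      IsColimit c → IsVanKampenColimit c) :
    PreservesLimitsOfShape WalkingCospan (copowerFunctor V) := by
  refine ⟨fun {K} => ?_⟩
  have := copower_preserves_cospan V hVK
    (K.map WalkingCospan.Hom.inl) (K.map WalkingCospan.Hom.inr)
  exact preservesLimit_of_iso_diagram _ (diagramIsoCospan K).symm
end

section
/- Let V be a lextensive category with set-indexed coproducts, and define an object c of V to be discrete if the counit ε_c : V(1,c)·1 → c of the adjunction (−)·1 ⊣ V(1,−) is an isomorphism. Suppose 1 is connected in V. Then a coproduct Σ_{i∈I} c_i is discrete if and only if c_i is discrete for every i ∈ I. -/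
open CategoryTheory CategoryTheory.Limits Opposite

universe v u

variable {V : Type u} [Category.{v} V]

/-- The counit `ε_c : V(1,c)·1 ⟶ c` of the adjunction `(−)·1 ⊣ V(1,−)`: the canonical map
from the copower of the terminal object by the set of points of `c`. -/
noncomputable def counitPoints [HasTerminal V] [HasCoproducts.{v} V] (c : V) :
    (∐ fun (_ : (⊤_ V) ⟶ c) => (⊤_ V)) ⟶ c :=
  Sigma.desc fun p => p

/-- An object `c` is discrete if the counit `ε_c : V(1,c)·1 ⟶ c` is an isomorphism. -/
noncomputable def IsDiscreteObj [HasTerminal V] [HasCoproducts.{v} V] (c : V) : Prop :=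
  IsIso (counitPoints c)

/-- If in a pullback square the map parallel to an isomorphism is itself below a pullback,
it is an isomorphism. -/
theorem isIso_snd_of_isPullback {P X Y Z : V} {fst : P ⟶ X} {snd : P ⟶ Y}
    {f : X ⟶ Z} {g : Y ⟶ Z} (h : IsPullback fst snd f g) [IsIso f] : IsIso snd := by
  have hcomm : (g ≫ inv f) ≫ f = 𝟙 Y ≫ g := by simp
  refine ⟨h.lift (g ≫ inv f) (𝟙 Y) hcomm, ?_, h.lift_snd _ _ _⟩
  apply h.hom_ext
  · rw [Category.assoc, h.lift_fst, Category.id_comp, ← Category.assoc, ← h.w,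
      Category.assoc, IsIso.hom_inv_id, Category.comp_id]
  · rw [Category.assoc, h.lift_snd, Category.comp_id, Category.id_comp]

/-- In a category where coproducts are van Kampen, a coproduct of maps is an isomorphism
iff each component is. -/
theorem sigmaMap_isIso_iff [HasCoproducts.{v} V]
    (hVK : ∀ {ι : Type v} (F : Discrete ι ⥤ V) (c : Cocone F),
      IsColimit c → IsVanKampenColimit c)
    {I : Type v} {a b : I → V} (f : ∀ i, a i ⟶ b i) :
    IsIso (Limits.Sigma.map f) ↔ ∀ i, IsIso (f i) := by
  constructor
  · intro hf i
    have hb : IsVanKampenColimit (Cofan.mk (∐ b) (Sigma.ι b)) :=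
      hVK _ _ (coproductIsCoproduct b)
    have hcomm : Discrete.natTrans (fun i => f i.as) ≫ (Cofan.mk (∐ b) (Sigma.ι b)).ι =
        (Cofan.mk (∐ a) (Sigma.ι a)).ι ≫ (Functor.const _).map (Limits.Sigma.map f) := by
      ext ⟨j⟩
      simp
    have := (hb (Cofan.mk (∐ a) (Sigma.ι a)) (Discrete.natTrans (fun i => f i.as))
      (Limits.Sigma.map f) hcomm (NatTrans.equifibered_of_discrete _)).mp
      ⟨coproductIsCoproduct a⟩ ⟨i⟩
    exact isIso_snd_of_isPullback this
  · intro hf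
    refine ⟨Limits.Sigma.map (fun i => inv (f i)), ?_, ?_⟩ <;> ext i <;> simp

/-- In a lextensive category with connected terminal object, a set-indexed coproduct is
discrete if and only if each of its summands is discrete. -/
theorem coproduct_discrete_iff
    [HasFiniteLimits V] [HasCoproducts.{v} V]
    (hVK : ∀ {ι : Type v} (F : Discrete ι ⥤ V) (c : Cocone F),
      IsColimit c → IsVanKampenColimit c)
    (hconn : ∀ ι : Type v, PreservesColimitsOfShape (Discrete ι) (coyoneda.obj (op (⊤_ V))))
    {I : Type v} (c : I → V) :
    IsDiscreteObj (∐ c) ↔ ∀ i, IsDiscreteObj (c i) := by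
  classical
  have := hconn I
  -- the bijection between points of the coproduct and the disjoint union of points
  let G := coyoneda.obj (op (⊤_ V))
  have hcmp : IsIso (sigmaComparison G c) := inferInstance
  let ee : (Σ i, ((⊤_ V) ⟶ c i)) ≃ ((⊤_ V) ⟶ ∐ c) :=
    ((Types.coproductIso.{v, v} (fun i => (⊤_ V) ⟶ c i)).symm ≪≫
      asIso (sigmaComparison G c)).toEquiv
  have hee : ∀ (i : I) (p : (⊤_ V) ⟶ c i), ee ⟨i, p⟩ = p ≫ Sigma.ι c i := by
    intro i p
    have h1 : (Types.coproductIso.{v, v} (fun i => (⊤_ V) ⟶ c i)).inv ⟨i, p⟩ =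
        Sigma.ι (fun i => (⊤_ V) ⟶ c i) i p :=
      ConcreteCategory.congr_hom (Types.coproductIso_mk_comp_inv.{v, v} (fun i => (⊤_ V) ⟶ c i) i) p
    have h2 : sigmaComparison G c (Sigma.ι (fun i => (⊤_ V) ⟶ c i) i p) =
        G.map (Sigma.ι c i) p :=
      ConcreteCategory.congr_hom (ι_comp_sigmaComparison G c i) p
    have h0 : ee ⟨i, p⟩ =
        sigmaComparison G c ((Types.coproductIso.{v, v} (fun i => (⊤_ V) ⟶ c i)).inv ⟨i, p⟩) :=
      rfl
    rw [h0, h1, h2]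
    rfl
  let iso1 : (∐ fun (_ : Σ i, ((⊤_ V) ⟶ c i)) => (⊤_ V)) ≅
      (∐ fun (_ : (⊤_ V) ⟶ ∐ c) => (⊤_ V)) :=
    Sigma.whiskerEquiv (f := fun (_ : Σ i, ((⊤_ V) ⟶ c i)) => (⊤_ V))
      (g := fun (_ : ((⊤_ V) ⟶ ∐ c)) => (⊤_ V)) ee (fun _ => Iso.refl _)
  let iso2 : (∐ fun i => ∐ fun (_ : (⊤_ V) ⟶ c i) => (⊤_ V)) ≅
      (∐ fun (_ : Σ i, ((⊤_ V) ⟶ c i)) => (⊤_ V)) :=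
    sigmaSigmaIso (fun i => (⊤_ V) ⟶ c i) (fun _ _ => ⊤_ V)
  have key : iso2.hom ≫ iso1.hom ≫ counitPoints (∐ c) =
      Limits.Sigma.map (fun i => counitPoints (c i)) := by
    apply Sigma.hom_ext
    intro i
    rw [← Category.assoc, ← Category.assoc]
    apply Sigma.hom_ext
    intro p
    simp only [Category.assoc]
    simp only [iso1, iso2, sigmaSigmaIso, counitPoints, Sigma.whiskerEquiv,
      colimit.ι_desc_assoc, Cofan.mk_ι_app, colimit.ι_desc, ι_colimMap_assoc,
      Discrete.functor_obj_eq_as, Discrete.natTrans_app, ι_colimMap]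
    rw [Sigma.ι_comp_map'_assoc]
    simp only [Iso.refl_inv, Category.id_comp, colimit.ι_desc, Cofan.mk_ι_app]
    rw [hee]
    simp
  have hrw : counitPoints (∐ c) = iso1.inv ≫ iso2.inv ≫ Limits.Sigma.map (fun i => counitPoints (c i)) := by
    rw [← key]
    simp
  have main : IsIso (counitPoints (∐ c)) ↔
      IsIso (Limits.Sigma.map (fun i => counitPoints (c i))) := by
    constructor
    · intro h
      rw [← key]
      infer_instance
    · intro h
      rw [hrw]
      infer_instance
  rw [show IsDiscreteObj (∐ c) ↔ IsIso (counitPoints (∐ c)) from Iff.rfl, main,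
    sigmaMap_isIso_iff hVK]
  rfl
end

section
/- Let C be an extensive category with pullbacks and set-indexed coproducts. Suppose given a commutative square of set-indexed families: index sets W, X, Y, Z with functions f : W → X, g : W → Y, h : X → Z, k : Y → Z forming a pullback square of sets with h∘f = k∘g, families a : W → Ob(C), b : X → Ob(C), c : Y → Ob(C), d : Z → Ob(C), and morphisms â_w : a_w → b_{f w}, ĝ_w : a_w → c_{g w}, ĥ_x : b_x → d_{h x}, k̂_y : c_y → d_{k y}, such that for each w ∈ W the square (â_w, ĝ_w, ĥ_{f w}, k̂_{g w}) is a pullback in C. Then the induced square of coproducts Σ_w a_w → Σ_x b_x, Σ_w a_w → Σ_y c_y, Σ_x b_x → Σ_z d_z, Σ_y c_y → Σ_z d_z is a pullback square in C. -/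
open CategoryTheory CategoryTheory.Limits

universe v u

section Aux

variable {C : Type u} [Category.{v} C] [HasCoproducts.{v} C]

lemma aux_eqToHom_iota {ι : Type v} (d : ι → C) {z z' : ι} (e : z = z') (p : d z' = d z) :
    eqToHom p ≫ Sigma.ι d z = Sigma.ι d z' := by
  subst e
  have hp : p = rfl := rfl
  rw [hp, eqToHom_refl, Category.id_comp]

end Aux

set_option maxHeartbeats 3000000 in
/-- In an extensive category, the coproduct of a pullback-indexed family of pullback squares
is a pullback square. -/
theorem coproduct_of_indexed_pullbacks
    {C : Type u} [Category.{v} C] [HasPullbacks C] [HasCoproducts.{v} C]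
    (hVK : ∀ {ι : Type v} (F : Discrete ι ⥤ C) (c : Cocone F),
      IsColimit c → IsVanKampenColimit c)
    {W X Y Z : Type v} {f : W → X} {g : W → Y} {h : X → Z} {k : Y → Z}
    (hcomm : ∀ w, h (f w) = k (g w))
    (hindex : IsPullback (C := Type v) (TypeCat.ofHom f) (TypeCat.ofHom g) (TypeCat.ofHom h)
      (TypeCat.ofHom k))
    (a : W → C) (b : X → C) (c : Y → C) (d : Z → C)
    (af : ∀ w, a w ⟶ b (f w)) (ag : ∀ w, a w ⟶ c (g w))
    (bh : ∀ x, b x ⟶ d (h x)) (ck : ∀ y, c y ⟶ d (k y))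
    (hfib : ∀ w, IsPullback (af w) (ag w) (bh (f w))
      (ck (g w) ≫ eqToHom (congrArg d (hcomm w)).symm)) :
    IsPullback
      (Sigma.desc fun w => af w ≫ Sigma.ι b (f w))
      (Sigma.desc fun w => ag w ≫ Sigma.ι c (g w))
      (Sigma.desc fun x => bh x ≫ Sigma.ι d (h x))
      (Sigma.desc fun y => ck y ≫ Sigma.ι d (k y)) := by
  classical
  haveI : HasColimitsOfShape (Discrete PEmpty.{v+1}) C := inferInstance
  haveI hInit : HasInitial C :=
    hasColimitsOfShape_of_equivalence
      (equivalenceOfIsEmpty (Discrete PEmpty.{v+1}) (Discrete PEmpty.{1}))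
  have hstrict : ∀ {A : C} (_ : A ⟶ ⊥_ C), IsInitial A := by
    intro A t
    let F : Discrete PEmpty.{v+1} ⥤ C := Discrete.functor PEmpty.elim
    let c0 : Cocone F := ⟨⊥_ C, ⟨fun j => j.as.elim, fun {j j'} _ => j.as.elim⟩⟩
    have hc0 : IsColimit c0 :=
      { desc := fun s => initial.to s.pt
        fac := fun s j => j.as.elim
        uniq := fun s m _ => initial.hom_ext _ _ }
    have hA := Classical.choice <| (hVK F c0 hc0).isUniversal
      ⟨A, ⟨fun j => j.as.elim, fun {j j'} _ => j.as.elim⟩⟩ (𝟙 F) t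
      (by ext ⟨⟨⟩⟩) (NatTrans.equifibered_of_discrete _) (fun j => j.as.elim)
    exact IsInitial.ofUniqueHom
      (fun M => hA.desc ⟨M, ⟨fun j => j.as.elim, fun {j j'} _ => j.as.elim⟩⟩)
      (fun M m => hA.uniq ⟨M, ⟨fun j => j.as.elim, fun {j j'} _ => j.as.elim⟩⟩ m
        (fun j => j.as.elim))
  have hmono : ∀ {ι : Type v} (e : ι → C) (z : ι), Mono (Sigma.ι e z) := by
    intro ι e z
    exact mono_of_cofan_isVanKampen
      (hVK (Discrete.functor e) _ (colimit.isColimit _)) ⟨z⟩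
  have hdisj : ∀ {ι : Type v} (e : ι → C) {z z' : ι}, z ≠ z' → ∀ {Q : C}
      (u : Q ⟶ e z) (v : Q ⟶ e z'),
      u ≫ Sigma.ι e z = v ≫ Sigma.ι e z' → IsInitial Q := by
    intro ι e z z' hne Q u v huv
    have hP := isPullback_initial_to_of_cofan_isVanKampen
      (hVK (Discrete.functor e) _ (colimit.isColimit _)) ⟨z⟩ ⟨z'⟩
      (fun hzz => hne (congrArg Discrete.as hzz))
    exact hstrict (hP.lift u v huv)
  have hdesc : ∀ {ι : Type v} (e : ι → C) {T : C} (t : T ⟶ ∐ e),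
      Nonempty (IsColimit (Cofan.mk T (fun x => pullback.fst t (Sigma.ι e x)))) := by
    intro ι e T t
    refine (hVK (Discrete.functor e) _ (colimit.isColimit _)).isUniversal
      (Cofan.mk T (fun x => pullback.fst t (Sigma.ι e x)))
      (Discrete.natTrans fun x => pullback.snd t (Sigma.ι e x.as)) t ?_
      (NatTrans.equifibered_of_discrete _) ?_
    · ext ⟨x⟩
      simpa using pullback.condition.symm
    · rintro ⟨x⟩
      exact IsPullback.of_hasPullback t (Sigma.ι e x)
  have hinj : ∀ w w' : W, f w = f w' → g w = g w' → w = w' := by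
    intro w w' e1 e2
    have := hindex.hom_ext (W := PUnit.{v+1}) (k := TypeCat.ofHom fun _ => w)
      (l := TypeCat.ofHom fun _ => w') (by ext; exact e1) (by ext; exact e2)
    exact congrArg (fun m : PUnit.{v+1} ⟶ W => m PUnit.unit) this
  have hex : ∀ {x : X} {y : Y}, h x = k y → ∃ w, f w = x ∧ g w = y := by
    intro x y e
    exact ⟨hindex.lift (W := PUnit.{v+1}) (TypeCat.ofHom fun _ => x) (TypeCat.ofHom fun _ => y)
        (by ext; exact e) PUnit.unit,
      congrArg (fun m : PUnit.{v+1} ⟶ X => m PUnit.unit) (hindex.lift_fst _ _ _),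
      congrArg (fun m : PUnit.{v+1} ⟶ Y => m PUnit.unit) (hindex.lift_snd _ _ _)⟩
  set F1 := Sigma.desc (fun w => af w ≫ Sigma.ι b (f w)) with hF1
  set G1 := Sigma.desc (fun w => ag w ≫ Sigma.ι c (g w)) with hG1
  set H1 := Sigma.desc (fun x => bh x ≫ Sigma.ι d (h x)) with hH1
  set K1 := Sigma.desc (fun y => ck y ≫ Sigma.ι d (k y)) with hK1
  have hιF1 : ∀ w, Sigma.ι a w ≫ F1 = af w ≫ Sigma.ι b (f w) := fun w => by
    rw [hF1]; simp
  have hιG1 : ∀ w, Sigma.ι a w ≫ G1 = ag w ≫ Sigma.ι c (g w) := fun w => by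
    rw [hG1]; simp
  have hιH1 : ∀ x, Sigma.ι b x ≫ H1 = bh x ≫ Sigma.ι d (h x) := fun x => by
    rw [hH1]; simp
  have hιK1 : ∀ y, Sigma.ι c y ≫ K1 = ck y ≫ Sigma.ι d (k y) := fun y => by
    rw [hK1]; simp
  have hcmm : F1 ≫ H1 = G1 ≫ K1 := by
    apply colimit.hom_ext
    rintro ⟨w⟩
    have l1 : colimit.ι (Discrete.functor a) ⟨w⟩ = Sigma.ι a w := rfl
    rw [l1, ← Category.assoc, hιF1 w, ← Category.assoc, hιG1 w,
      Category.assoc, hιH1 (f w), Category.assoc, hιK1 (g w),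
      ← aux_eqToHom_iota d (hcomm w) ((congrArg d (hcomm w)).symm),
      ← Category.assoc, (hfib w).w]
    simp only [Category.assoc]
  have kuniq : ∀ (x : X) (y : Y) {Q : C} (u : Q ⟶ b x) (v : Q ⟶ c y)
      (L₁ L₂ : Q ⟶ ∐ a),
      L₁ ≫ F1 = u ≫ Sigma.ι b x → L₁ ≫ G1 = v ≫ Sigma.ι c y →
      L₂ ≫ F1 = u ≫ Sigma.ι b x → L₂ ≫ G1 = v ≫ Sigma.ι c y → L₁ = L₂ := by
    intro x y Q u v L₁ L₂ h1f h1g h2f h2g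
    have hQ1 := Classical.choice (hdesc a L₁)
    apply hQ1.hom_ext
    rintro ⟨w⟩
    simp only [Cofan.mk_ι_app]
    set r1 := pullback.fst L₁ (Sigma.ι a w) with hr1
    set r2 := pullback.snd L₁ (Sigma.ι a w) with hr2
    have c1 : r1 ≫ L₁ = r2 ≫ Sigma.ι a w := pullback.condition
    have hR := Classical.choice (hdesc a (r1 ≫ L₂))
    apply hR.hom_ext
    rintro ⟨w'⟩
    simp only [Cofan.mk_ι_app]
    set s1 := pullback.fst (r1 ≫ L₂) (Sigma.ι a w') with hs1
    set s2 := pullback.snd (r1 ≫ L₂) (Sigma.ι a w') with hs2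
    have c2 : s1 ≫ (r1 ≫ L₂) = s2 ≫ Sigma.ι a w' := pullback.condition
    have eb : ((s1 ≫ r2) ≫ af w) ≫ Sigma.ι b (f w)
        = (s2 ≫ af w') ≫ Sigma.ι b (f w') := by
      calc ((s1 ≫ r2) ≫ af w) ≫ Sigma.ι b (f w)
          = s1 ≫ (r2 ≫ Sigma.ι a w) ≫ F1 := by
            simp only [Category.assoc]; rw [hιF1 w]
        _ = s1 ≫ (r1 ≫ L₁) ≫ F1 := by rw [c1]
        _ = s1 ≫ r1 ≫ u ≫ Sigma.ι b x := by simp only [Category.assoc, h1f]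
        _ = s1 ≫ (r1 ≫ L₂) ≫ F1 := by simp only [Category.assoc, h2f]
        _ = (s2 ≫ Sigma.ι a w') ≫ F1 := by rw [← Category.assoc, c2]
        _ = (s2 ≫ af w') ≫ Sigma.ι b (f w') := by
            simp only [Category.assoc]; rw [hιF1 w']
    have ec : ((s1 ≫ r2) ≫ ag w) ≫ Sigma.ι c (g w)
        = (s2 ≫ ag w') ≫ Sigma.ι c (g w') := by
      calc ((s1 ≫ r2) ≫ ag w) ≫ Sigma.ι c (g w)
          = s1 ≫ (r2 ≫ Sigma.ι a w) ≫ G1 := by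
            simp only [Category.assoc]; rw [hιG1 w]
        _ = s1 ≫ (r1 ≫ L₁) ≫ G1 := by rw [c1]
        _ = s1 ≫ r1 ≫ v ≫ Sigma.ι c y := by simp only [Category.assoc, h1g]
        _ = s1 ≫ (r1 ≫ L₂) ≫ G1 := by simp only [Category.assoc, h2g]
        _ = (s2 ≫ Sigma.ι a w') ≫ G1 := by rw [← Category.assoc, c2]
        _ = (s2 ≫ ag w') ≫ Sigma.ι c (g w') := by
            simp only [Category.assoc]; rw [hιG1 w']
    by_cases ew : w = w'
    · subst ew
      have hsr : s1 ≫ r2 = s2 := by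
        haveI := hmono b (f w)
        haveI := hmono c (g w)
        apply (hfib w).hom_ext
        · exact (cancel_mono (Sigma.ι b (f w))).mp eb
        · exact (cancel_mono (Sigma.ι c (g w))).mp ec
      calc s1 ≫ r1 ≫ L₁ = s1 ≫ r2 ≫ Sigma.ι a w := by rw [c1]
        _ = (s1 ≫ r2) ≫ Sigma.ι a w := by simp only [Category.assoc]
        _ = s2 ≫ Sigma.ι a w := by rw [hsr]
        _ = s1 ≫ r1 ≫ L₂ := by rw [← c2]
    · by_cases efw : f w = f w'
      · by_cases egw : g w = g w'
        · exact absurd (hinj w w' efw egw) ew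
        · exact (hdisj c egw _ _ ec).hom_ext _ _
      · exact (hdisj b efw _ _ eb).hom_ext _ _
  have kex : ∀ (x : X) (y : Y) {Q : C} (u : Q ⟶ b x) (v : Q ⟶ c y),
      (u ≫ bh x) ≫ Sigma.ι d (h x) = (v ≫ ck y) ≫ Sigma.ι d (k y) →
      ∃ L : Q ⟶ ∐ a, L ≫ F1 = u ≫ Sigma.ι b x ∧ L ≫ G1 = v ≫ Sigma.ι c y := by
    intro x y Q u v huv
    by_cases e : h x = k y
    · obtain ⟨w, ex, ey⟩ := hex e
      subst ex
      subst ey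
      haveI := hmono d (h (f w))
      have cond : u ≫ bh (f w)
          = v ≫ (ck (g w) ≫ eqToHom (congrArg d (hcomm w)).symm) := by
        rw [← cancel_mono (Sigma.ι d (h (f w)))]
        calc (u ≫ bh (f w)) ≫ Sigma.ι d (h (f w))
            = (v ≫ ck (g w)) ≫ Sigma.ι d (k (g w)) := huv
          _ = (v ≫ ck (g w)) ≫ (eqToHom (congrArg d (hcomm w)).symm
                ≫ Sigma.ι d (h (f w))) := by
              rw [aux_eqToHom_iota d (hcomm w) ((congrArg d (hcomm w)).symm)]
          _ = (v ≫ (ck (g w) ≫ eqToHom (congrArg d (hcomm w)).symm))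
                ≫ Sigma.ι d (h (f w)) := by simp only [Category.assoc]
      refine ⟨(hfib w).lift u v cond ≫ Sigma.ι a w, ?_, ?_⟩
      · rw [Category.assoc, hιF1 w, ← Category.assoc, (hfib w).lift_fst]
      · rw [Category.assoc, hιG1 w, ← Category.assoc, (hfib w).lift_snd]
    · have hQi : IsInitial Q := hdisj d e _ _ huv
      exact ⟨hQi.to _, hQi.hom_ext _ _, hQi.hom_ext _ _⟩
  have glift : ∀ (T : C) (tb : T ⟶ ∐ b) (tc : T ⟶ ∐ c), tb ≫ H1 = tc ≫ K1 →
      ∃ L : T ⟶ ∐ a, L ≫ F1 = tb ∧ L ≫ G1 = tc := by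
    intro T tb tc hcond
    have hT := Classical.choice (hdesc b tb)
    have inner : ∀ x : X, ∃ Lx : pullback tb (Sigma.ι b x) ⟶ ∐ a,
        Lx ≫ F1 = pullback.snd tb (Sigma.ι b x) ≫ Sigma.ι b x ∧
        Lx ≫ G1 = pullback.fst tb (Sigma.ι b x) ≫ tc := by
      intro x
      set px := pullback.fst tb (Sigma.ι b x) with hpx
      set qx := pullback.snd tb (Sigma.ι b x) with hqx
      have cbx : px ≫ tb = qx ≫ Sigma.ι b x := pullback.condition
      have hPx := Classical.choice (hdesc c (px ≫ tc))
      have inner2 : ∀ y : Y, ∃ Ly : pullback (px ≫ tc) (Sigma.ι c y) ⟶ ∐ a,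
          Ly ≫ F1 = (pullback.fst (px ≫ tc) (Sigma.ι c y) ≫ qx) ≫ Sigma.ι b x ∧
          Ly ≫ G1 = pullback.snd (px ≫ tc) (Sigma.ι c y) ≫ Sigma.ι c y := by
        intro y
        set p2 := pullback.fst (px ≫ tc) (Sigma.ι c y) with hp2
        set q2 := pullback.snd (px ≫ tc) (Sigma.ι c y) with hq2
        have ccy : p2 ≫ (px ≫ tc) = q2 ≫ Sigma.ι c y := pullback.condition
        apply kex x y (p2 ≫ qx) q2
        calc ((p2 ≫ qx) ≫ bh x) ≫ Sigma.ι d (h x)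
            = p2 ≫ qx ≫ (bh x ≫ Sigma.ι d (h x)) := by simp only [Category.assoc]
          _ = p2 ≫ qx ≫ (Sigma.ι b x ≫ H1) := by rw [hιH1 x]
          _ = p2 ≫ (qx ≫ Sigma.ι b x) ≫ H1 := by simp only [Category.assoc]
          _ = p2 ≫ (px ≫ tb) ≫ H1 := by rw [cbx]
          _ = p2 ≫ px ≫ (tb ≫ H1) := by simp only [Category.assoc]
          _ = p2 ≫ px ≫ (tc ≫ K1) := by rw [hcond]
          _ = (p2 ≫ (px ≫ tc)) ≫ K1 := by simp only [Category.assoc]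
          _ = (q2 ≫ Sigma.ι c y) ≫ K1 := by rw [ccy]
          _ = (q2 ≫ ck y) ≫ Sigma.ι d (k y) := by
              simp only [Category.assoc]; rw [hιK1 y]
      choose Ly hLyF hLyG using inner2
      refine ⟨hPx.desc (Cofan.mk _ Ly), ?_, ?_⟩
      · apply hPx.hom_ext
        rintro ⟨y⟩
        simp only [Cofan.mk_ι_app]
        have fac : pullback.fst (px ≫ tc) (Sigma.ι c y) ≫ hPx.desc (Cofan.mk _ Ly)
            = Ly y := hPx.fac (Cofan.mk _ Ly) ⟨y⟩
        simp only [← Category.assoc]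
        rw [fac, hLyF y]
      · apply hPx.hom_ext
        rintro ⟨y⟩
        simp only [Cofan.mk_ι_app]
        have fac : pullback.fst (px ≫ tc) (Sigma.ι c y) ≫ hPx.desc (Cofan.mk _ Ly)
            = Ly y := hPx.fac (Cofan.mk _ Ly) ⟨y⟩
        simp only [← Category.assoc]
        rw [fac, hLyG y]
        simp only [Category.assoc]
        exact pullback.condition.symm
    choose Lx hLxF hLxG using inner
    refine ⟨hT.desc (Cofan.mk _ Lx), ?_, ?_⟩
    · apply hT.hom_ext
      rintro ⟨x⟩
      simp only [Cofan.mk_ι_app]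
      have fac : pullback.fst tb (Sigma.ι b x) ≫ hT.desc (Cofan.mk _ Lx)
          = Lx x := hT.fac (Cofan.mk _ Lx) ⟨x⟩
      simp only [← Category.assoc]
      rw [fac, hLxF x]
      exact pullback.condition.symm
    · apply hT.hom_ext
      rintro ⟨x⟩
      simp only [Cofan.mk_ι_app]
      have fac : pullback.fst tb (Sigma.ι b x) ≫ hT.desc (Cofan.mk _ Lx)
          = Lx x := hT.fac (Cofan.mk _ Lx) ⟨x⟩
      simp only [← Category.assoc]
      rw [fac, hLxG x]
  have guniq : ∀ {T : C} (m₁ m₂ : T ⟶ ∐ a),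
      m₁ ≫ F1 = m₂ ≫ F1 → m₁ ≫ G1 = m₂ ≫ G1 → m₁ = m₂ := by
    intro T m₁ m₂ hf hg
    have hT := Classical.choice (hdesc b (m₁ ≫ F1))
    apply hT.hom_ext
    rintro ⟨x⟩
    simp only [Cofan.mk_ι_app]
    set px := pullback.fst (m₁ ≫ F1) (Sigma.ι b x) with hpx
    set qx := pullback.snd (m₁ ≫ F1) (Sigma.ι b x) with hqx
    have cbx : px ≫ (m₁ ≫ F1) = qx ≫ Sigma.ι b x := pullback.condition
    have hPx := Classical.choice (hdesc c (px ≫ (m₁ ≫ G1)))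
    apply hPx.hom_ext
    rintro ⟨y⟩
    simp only [Cofan.mk_ι_app]
    set p2 := pullback.fst (px ≫ (m₁ ≫ G1)) (Sigma.ι c y) with hp2
    set q2 := pullback.snd (px ≫ (m₁ ≫ G1)) (Sigma.ι c y) with hq2
    have ccy : p2 ≫ (px ≫ (m₁ ≫ G1)) = q2 ≫ Sigma.ι c y := pullback.condition
    have e1 : (p2 ≫ (px ≫ m₁)) ≫ F1 = (p2 ≫ qx) ≫ Sigma.ι b x := by
      simp only [Category.assoc]
      rw [cbx]
    have e2 : (p2 ≫ (px ≫ m₁)) ≫ G1 = q2 ≫ Sigma.ι c y := by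
      simp only [Category.assoc]
      exact ccy
    have e1' : (p2 ≫ (px ≫ m₂)) ≫ F1 = (p2 ≫ qx) ≫ Sigma.ι b x := by
      simp only [Category.assoc]
      rw [← hf, cbx]
    have e2' : (p2 ≫ (px ≫ m₂)) ≫ G1 = q2 ≫ Sigma.ι c y := by
      simp only [Category.assoc]
      rw [← hg]
      exact ccy
    exact kuniq x y (p2 ≫ qx) q2 _ _ e1 e2 e1' e2'
  refine IsPullback.of_isLimit' ⟨hcmm⟩ ?_
  refine PullbackCone.IsLimit.mk _
    (fun s => (glift s.pt s.fst s.snd s.condition).choose)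
    (fun s => (glift s.pt s.fst s.snd s.condition).choose_spec.1)
    (fun s => (glift s.pt s.fst s.snd s.condition).choose_spec.2)
    (fun s m hm1 hm2 => guniq m _
      (by rw [hm1, (glift s.pt s.fst s.snd s.condition).choose_spec.1])
      (by rw [hm2, (glift s.pt s.fst s.snd s.condition).choose_spec.2]))
end
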